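/- Fix an integer m ≥ 2. The generating functions T_i(x) satisfy, as formal power series: T₁(x) = Z_m(x); T₂(x) = (1−x^{m−2})/(1−x) + x^{m−2}G(x); T₃(x) = x^{m−2}(1−x^{m−2})/(1−x) + x^{2m−4}H(x); T₄(x) = (1−x^{m−1})/(1−x) + x^{m−1}Z_m(x); T₅(x) = x^{m−1}(1−x^{m−2})/(1−x) + x^{2m−3}G(x); T₆(x) = x^{m−1}(1−x^{m−1})/(1−x) + x^{2m−2}Z_m(x). -/

import Mathlib

open PowerSeries

namespace Paper

/-- The arc set of a diagram: a finite set of pairs `(i,j)`. -/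
abbrev Arcs := Finset (ℕ × ℕ)

/-- A diagram on `[n] = {1,…,n}`: every arc `(i,j)` satisfies `1 ≤ i < j ≤ n`. -/
def IsDiagram (n : ℕ) (A : Arcs) : Prop :=
  ∀ p ∈ A, 1 ≤ p.1 ∧ p.1 < p.2 ∧ p.2 ≤ n

/-- Two arcs `p = (i₁,j₁)` and `q = (i₂,j₂)` cross if `i₁ < i₂ < j₁ < j₂`. -/
def Crossing (p q : ℕ × ℕ) : Prop :=
  p.1 < q.1 ∧ q.1 < p.2 ∧ p.2 < q.2

/-- A stack on `[n]`: a diagram with no two crossing arcs. -/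
def IsStack (n : ℕ) (A : Arcs) : Prop :=
  IsDiagram n A ∧ ∀ p ∈ A, ∀ q ∈ A, ¬ Crossing p q

/-- Left-degree of vertex `v`: number of arcs `(u,v)` with `u < v`. -/
def ld (A : Arcs) (v : ℕ) : ℕ := (A.filter fun p => p.2 = v).card

/-- Right-degree of vertex `v`: number of arcs `(v,w)` with `v < w`. -/
def rd (A : Arcs) (v : ℕ) : ℕ := (A.filter fun p => p.1 = v).card

/-- Degree of a vertex. -/
def deg (A : Arcs) (v : ℕ) : ℕ := ld A v + rd A v

/-- A zigzag stack: a stack where every vertex has degree ≤ 2 and no vertex has both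
positive left-degree and positive right-degree. -/
def IsZigzag (n : ℕ) (A : Arcs) : Prop :=
  IsStack n A ∧ (∀ v, deg A v ≤ 2) ∧ ∀ v, ¬ (1 ≤ ld A v ∧ 1 ≤ rd A v)

/-- Adjacency in the underlying graph of a diagram. -/
def adj (A : Arcs) (u v : ℕ) : Prop := (u, v) ∈ A ∨ (v, u) ∈ A

/-- `v` lies in the primary component (connected component of vertex 1). -/
def inPrimary (A : Arcs) (v : ℕ) : Prop := Relation.ReflTransGen (adj A) 1 v

/-- The underlying graph on vertex set `[n]` is connected. -/
def ConnectedOn (n : ℕ) (A : Arcs) : Prop :=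
  ∀ u v, 1 ≤ u → u ≤ n → 1 ≤ v → v ≤ n → Relation.ReflTransGen (adj A) u v

/-- Number of stacks on `[n]`. -/
noncomputable def stackCount (n : ℕ) : ℕ := Nat.card {A : Arcs // IsStack n A}

/-- Number of zigzag stacks on `[n]`. -/
noncomputable def zigzagCount (n : ℕ) : ℕ := Nat.card {A : Arcs // IsZigzag n A}

/-- Number of connected zigzag stacks on `[n]`. -/
noncomputable def connZigzagCount (n : ℕ) : ℕ :=
  Nat.card {A : Arcs // IsZigzag n A ∧ ConnectedOn n A}

/-- The ordinary generating function of the numbers of zigzag stacks. -/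
noncomputable def Zgf : PowerSeries ℚ := PowerSeries.mk fun n => (zigzagCount n : ℚ)

/-- The power series variable over ℚ. -/
noncomputable def Xq : PowerSeries ℚ := PowerSeries.X

/-- An `m`-reduced zigzag stack on `[n]`:
(1) `ld(i) + rd(i+m−1) ≤ 2` for `1 ≤ i ≤ n−m+1` (written additively);
(2) if `1 ≤ i < j ≤ n` with `ld(i) > 0` and `rd(j) > 0` then `j − i ≥ m−1`. -/
def MRed (m n : ℕ) (A : Arcs) : Prop :=
  IsZigzag n A ∧
  (∀ i, 1 ≤ i → i + m ≤ n + 1 → ld A i + rd A (i + m - 1) ≤ 2) ∧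
  (∀ i j, 1 ≤ i → i < j → j ≤ n → 0 < ld A i → 0 < rd A j → i + m ≤ j + 1)

/-- An `m`-regular linear stack on `[n]`: every arc has length ≥ m and every vertex has
degree ≤ 2. -/
def RegLinear (m n : ℕ) (A : Arcs) : Prop :=
  IsStack n A ∧ (∀ p ∈ A, p.1 + m ≤ p.2) ∧ ∀ v, deg A v ≤ 2

/-- Number of `m`-reduced zigzag stacks on `[n]`. -/
noncomputable def zm (m n : ℕ) : ℕ := Nat.card {A : Arcs // MRed m n A}

/-- Number of `m`-regular linear stacks on `[n]`. -/
noncomputable def rmc (m n : ℕ) : ℕ := Nat.card {A : Arcs // RegLinear m n A}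

/-- Generating function of `m`-reduced zigzag stacks. -/
noncomputable def Zm (m : ℕ) : PowerSeries ℚ := PowerSeries.mk fun n => (zm m n : ℚ)

/-- Generating function of `m`-regular linear stacks. -/
noncomputable def Rm (m : ℕ) : PowerSeries ℚ := PowerSeries.mk fun n => (rmc m n : ℚ)

/-- Extended left-degree function used to define boundary types. -/
def extLD (A : Arcs) (l a v : ℕ) : ℕ :=
  if v = 0 then a else if v = l + 1 then 0 else ld A v

/-- Extended right-degree function used to define boundary types. -/
def extRD (A : Arcs) (l b v : ℕ) : ℕ :=
  if v = 0 then 0 else if v = l + 1 then b else rd A v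

/-- An `m`-reduced zigzag stack on `[l]` of boundary type `(a,b)`. -/
def BoundaryType (m a b l : ℕ) (A : Arcs) : Prop :=
  MRed m l A ∧
  (∀ i, i + m ≤ l + 2 → extLD A l a i + extRD A l b (i + m - 1) ≤ 2) ∧
  (∀ i j, i < j → j ≤ l + 1 → 0 < extLD A l a i → 0 < extRD A l b j → i + m ≤ j + 1)

/-- Number of boundary-type-`(a,b)` structures on `[n]`. -/
noncomputable def tc (m a b n : ℕ) : ℕ := Nat.card {A : Arcs // BoundaryType m a b n A}

/-- Generating functions `T_i(x)`; types T₁,…,T₆ correspond to `(a,b)` =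
(0,0), (1,0), (1,1), (2,0), (2,1), (2,2). -/
noncomputable def Tgf (m a b : ℕ) : PowerSeries ℚ := PowerSeries.mk fun n => (tc m a b n : ℚ)

/-- Type G : `m`-reduced zigzag stack with `deg(1) ≤ 1`. -/
def TypeG (m n : ℕ) (A : Arcs) : Prop := MRed m n A ∧ deg A 1 ≤ 1

/-- Type H : `m`-reduced zigzag stack with `deg(1) ≤ 1` and `deg(n) ≤ 1`. -/
def TypeH (m n : ℕ) (A : Arcs) : Prop := MRed m n A ∧ deg A 1 ≤ 1 ∧ deg A n ≤ 1

noncomputable def gcnt (m n : ℕ) : ℕ := Nat.card {A : Arcs // TypeG m n A}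
noncomputable def hcnt (m n : ℕ) : ℕ := Nat.card {A : Arcs // TypeH m n A}

/-- Generating function `G(x)`. -/
noncomputable def Ggf (m : ℕ) : PowerSeries ℚ := PowerSeries.mk fun n => (gcnt m n : ℚ)

/-- Generating function `H(x)`. -/
noncomputable def Hgf (m : ℕ) : PowerSeries ℚ := PowerSeries.mk fun n => (hcnt m n : ℚ)

/-- The reduction map θ_m: replace each arc `(i,j)` by `(i, j−m+1)`. -/
def theta (m : ℕ) (A : Arcs) : Arcs := A.image fun p => (p.1, p.2 - m + 1)

/-- Relabel a structure whose arcs lie in `{c+1, …}` down by `c`. -/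
def shiftDown (c : ℕ) (A : Arcs) : Arcs := A.image fun p => (p.1 - c, p.2 - c)

/-- Conditions (1) and (2) of `m`-reducedness restricted to a set `J` of vertices. -/
def CondOn (m : ℕ) (A : Arcs) (J : Finset ℕ) : Prop :=
  (∀ i, i ∈ J → i + m - 1 ∈ J → ld A i + rd A (i + m - 1) ≤ 2) ∧
  (∀ i j, i ∈ J → j ∈ J → i < j → 0 < ld A i → 0 < rd A j → i + m ≤ j + 1)

section Proofs

/-! ### Basic degree lemmas -/

lemma ld_pos_of_mem {A : Arcs} {p : ℕ × ℕ} (hp : p ∈ A) : 0 < ld A p.2 :=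
  Finset.card_pos.2 ⟨p, Finset.mem_filter.2 ⟨hp, rfl⟩⟩

lemma rd_pos_of_mem {A : Arcs} {p : ℕ × ℕ} (hp : p ∈ A) : 0 < rd A p.1 :=
  Finset.card_pos.2 ⟨p, Finset.mem_filter.2 ⟨hp, rfl⟩⟩

lemma ld_zero {n v : ℕ} {A : Arcs} (hA : IsDiagram n A) (hv : v ≤ 1 ∨ n < v) :
    ld A v = 0 := by
  unfold ld
  rw [Finset.card_eq_zero, Finset.filter_eq_empty_iff]
  intro p hp h
  have := hA p hp
  omega

lemma rd_zero {n v : ℕ} {A : Arcs} (hA : IsDiagram n A) (hv : v = 0 ∨ n ≤ v) :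
    rd A v = 0 := by
  unfold rd
  rw [Finset.card_eq_zero, Finset.filter_eq_empty_iff]
  intro p hp h
  have := hA p hp
  omega

lemma ld_le_two {n v : ℕ} {A : Arcs} (hz : IsZigzag n A) : ld A v ≤ 2 :=
  le_trans (Nat.le_add_right _ _) (hz.2.1 v)

lemma rd_le_two {n v : ℕ} {A : Arcs} (hz : IsZigzag n A) : rd A v ≤ 2 :=
  le_trans (Nat.le_add_left _ _) (hz.2.1 v)

lemma mred_diagram {m n : ℕ} {A : Arcs} (h : MRed m n A) : IsDiagram n A := h.1.1.1

/-! ### Shift-up maps -/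

/-- Shift a structure up by `c`. -/
def up (c : ℕ) (A : Arcs) : Arcs := A.image fun p => (p.1 + c, p.2 + c)

lemma upf_inj (c : ℕ) : Function.Injective (fun p : ℕ × ℕ => (p.1 + c, p.2 + c)) := by
  rintro ⟨a, b⟩ ⟨d, e⟩ h
  simp only [Prod.mk.injEq] at h ⊢
  omega

lemma up_inj (c : ℕ) : Function.Injective (up c) :=
  Finset.image_injective (upf_inj c)

lemma ld_up {c ℓ : ℕ} {A : Arcs} (hA : IsDiagram ℓ A) (w : ℕ) :
    ld (up c A) w = ld A (w - c) := by
  unfold ld up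
  rw [Finset.filter_image, Finset.card_image_of_injective _ (upf_inj c)]
  congr 1
  apply Finset.filter_congr
  intro p hp
  have := hA p hp
  simp only
  constructor <;> intro h <;> omega

lemma rd_up {c ℓ : ℕ} {A : Arcs} (hA : IsDiagram ℓ A) (w : ℕ) :
    rd (up c A) w = rd A (w - c) := by
  unfold rd up
  rw [Finset.filter_image, Finset.card_image_of_injective _ (upf_inj c)]
  congr 1
  apply Finset.filter_congr
  intro p hp
  have := hA p hp
  simp only
  constructor <;> intro h <;> omega

lemma deg_up {c ℓ : ℕ} {A : Arcs} (hA : IsDiagram ℓ A) (w : ℕ) :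
    deg (up c A) w = deg A (w - c) := by
  unfold deg
  rw [ld_up hA, rd_up hA]

lemma diagram_up {c ℓ n : ℕ} {A : Arcs} (hA : IsDiagram ℓ A) (h : c + ℓ ≤ n) :
    IsDiagram n (up c A) := by
  intro p hp
  rw [up, Finset.mem_image] at hp
  obtain ⟨q, hq, rfl⟩ := hp
  have := hA q hq
  simp only
  omega

lemma zig_up {c ℓ n : ℕ} {A : Arcs} (hA : IsDiagram ℓ A) (h : c + ℓ ≤ n) :
    IsZigzag n (up c A) ↔ IsZigzag ℓ A := by
  have hmem : ∀ q ∈ A, (q.1 + c, q.2 + c) ∈ up c A := by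
    intro q hq
    rw [up, Finset.mem_image]
    exact ⟨q, hq, rfl⟩
  constructor
  · rintro ⟨⟨_, hcr⟩, hdeg, hboth⟩
    refine ⟨⟨hA, ?_⟩, ?_, ?_⟩
    · intro p hp q hq hc
      refine hcr _ (hmem p hp) _ (hmem q hq) ?_
      obtain ⟨h1, h2, h3⟩ := hc
      exact ⟨by simpa using h1, by simpa using h2, by simpa using h3⟩
    · intro v
      have := hdeg (v + c)
      rwa [deg_up hA, Nat.add_sub_cancel] at this
    · intro v hv
      refine hboth (v + c) ?_
      rw [ld_up hA, rd_up hA, Nat.add_sub_cancel]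
      exact hv
  · rintro ⟨⟨_, hcr⟩, hdeg, hboth⟩
    refine ⟨⟨diagram_up hA h, ?_⟩, ?_, ?_⟩
    · intro p hp q hq hc
      rw [up, Finset.mem_image] at hp hq
      obtain ⟨p', hp', rfl⟩ := hp
      obtain ⟨q', hq', rfl⟩ := hq
      refine hcr _ hp' _ hq' ?_
      obtain ⟨h1, h2, h3⟩ := hc
      simp only at h1 h2 h3
      exact ⟨by omega, by omega, by omega⟩
    · intro v
      rw [deg_up hA]
      exact hdeg _
    · intro v hv
      rw [ld_up hA, rd_up hA] at hv
      exact hboth _ hv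

lemma mred_up {m c ℓ n : ℕ} {A : Arcs} (hm : 2 ≤ m) (hA : IsDiagram ℓ A)
    (h : c + ℓ ≤ n) : MRed m n (up c A) ↔ MRed m ℓ A := by
  constructor
  · rintro ⟨hz, h1, h2⟩
    have hz' := (zig_up hA h).1 hz
    refine ⟨hz', ?_, ?_⟩
    · intro i hi1 hi2
      have H := h1 (i + c) (by omega) (by omega)
      rw [ld_up hA, rd_up hA, Nat.add_sub_cancel,
        show i + c + m - 1 - c = i + m - 1 by omega] at H
      exact H
    · intro i j hi hij hj hld hrd
      have H := h2 (i + c) (j + c) (by omega) (by omega) (by omega)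
        (by rw [ld_up hA, Nat.add_sub_cancel]; exact hld)
        (by rw [rd_up hA, Nat.add_sub_cancel]; exact hrd)
      omega
  · rintro ⟨hz, h1, h2⟩
    refine ⟨(zig_up hA h).2 hz, ?_, ?_⟩
    · intro i hi1 hi2
      rw [ld_up hA, rd_up hA]
      rcases le_or_gt i c with hic | hic
      · rw [show i - c = 0 by omega, ld_zero hA (Or.inl (by omega))]
        have := rd_le_two (v := i + m - 1 - c) hz
        omega
      · rw [show i + m - 1 - c = (i - c) + m - 1 by omega]
        rcases le_or_gt (i - c + m) (ℓ + 1) with hie | hie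
        · exact h1 (i - c) (by omega) hie
        · rw [rd_zero hA (Or.inr (by omega))]
          have := ld_le_two (v := i - c) hz
          omega
    · intro i j hi hij hj hld hrd
      rw [ld_up hA] at hld
      rw [rd_up hA] at hrd
      have hic : c + 2 ≤ i := by
        by_contra hc
        rw [ld_zero hA (by omega)] at hld
        omega
      have hjc : c + 1 ≤ j ∧ j - c < ℓ := by
        constructor
        · by_contra hc
          rw [rd_zero hA (Or.inl (by omega))] at hrd
          omega
        · by_contra hc
          rw [rd_zero hA (Or.inr (by omega))] at hrd
          omega
      have := h2 (i - c) (j - c) (by omega) (by omega) (by omega) hld hrd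
      omega

lemma up_shiftDown {c n : ℕ} {A : Arcs} (hA : IsDiagram n A)
    (h : ∀ p ∈ A, c < p.1) : up c (shiftDown c A) = A := by
  unfold up shiftDown
  rw [Finset.image_image]
  have : A.image ((fun p : ℕ × ℕ => (p.1 + c, p.2 + c)) ∘ fun p => (p.1 - c, p.2 - c))
      = A.image id := by
    apply Finset.image_congr
    intro p hp
    have h1 := hA p hp
    have h2 := h p hp
    simp only [Function.comp, id]
    have : p.1 - c + c = p.1 := by omega
    have : p.2 - c + c = p.2 := by omega
    ext <;> simp <;> omega
  rw [this, Finset.image_id]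

lemma diagram_shiftDown {c n : ℕ} {A : Arcs} (hA : IsDiagram n A)
    (h : ∀ p ∈ A, c < p.1) : IsDiagram (n - c) (shiftDown c A) := by
  intro p hp
  rw [shiftDown, Finset.mem_image] at hp
  obtain ⟨q, hq, rfl⟩ := hp
  have h1 := hA q hq
  have h2 := h q hq
  simp only
  omega

/-! ### Extended degree helper lemmas -/

lemma extLD_zero {l a : ℕ} {A : Arcs} : extLD A l a 0 = a := if_pos rfl

lemma extLD_top {l a : ℕ} {A : Arcs} : extLD A l a (l + 1) = 0 := by
  unfold extLD
  rw [if_neg (by omega), if_pos rfl]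

lemma extLD_mid {l a v : ℕ} {A : Arcs} (h1 : v ≠ 0) (h2 : v ≠ l + 1) :
    extLD A l a v = ld A v := by
  unfold extLD
  rw [if_neg h1, if_neg h2]

lemma extRD_zero {l b : ℕ} {A : Arcs} : extRD A l b 0 = 0 := if_pos rfl

lemma extRD_top {l b : ℕ} {A : Arcs} : extRD A l b (l + 1) = b := by
  unfold extRD
  rw [if_neg (by omega), if_pos rfl]

lemma extRD_mid {l b v : ℕ} {A : Arcs} (h1 : v ≠ 0) (h2 : v ≠ l + 1) :
    extRD A l b v = rd A v := by
  unfold extRD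
  rw [if_neg h1, if_neg h2]

/-! ### Normal form for boundary types -/

lemma BT_iff {m a b n : ℕ} (hm : 2 ≤ m) (A : Arcs) :
    BoundaryType m a b n A ↔
      MRed m n A ∧
      (m ≤ n + 2 → a + (if n + 2 = m then b else rd A (m - 1)) ≤ 2) ∧
      (m ≤ n + 1 → ld A (n + 2 - m) + b ≤ 2) ∧
      (0 < a → ∀ j, 0 < rd A j → m ≤ j + 1) ∧
      (0 < a → 0 < b → m ≤ n + 2) ∧
      (0 < b → ∀ i, 0 < ld A i → i + m ≤ n + 2) := by
  constructor
  · rintro ⟨hM, h1, h2⟩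
    have hD : IsDiagram n A := mred_diagram hM
    refine ⟨hM, ?_, ?_, ?_, ?_, ?_⟩
    · intro hmn
      have H := h1 0 (by omega)
      rw [extLD_zero, Nat.zero_add] at H
      split_ifs with hc
      · rwa [show m - 1 = n + 1 by omega, extRD_top] at H
      · rwa [extRD_mid (by omega) (by omega)] at H
    · intro hmn
      have H := h1 (n + 2 - m) (by omega)
      rwa [extLD_mid (by omega) (by omega), show n + 2 - m + m - 1 = n + 1 by omega,
        extRD_top] at H
    · intro ha j hj
      have hj1 : j ≠ 0 := by
        rintro rfl
        rw [rd_zero hD (Or.inl rfl)] at hj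
        omega
      have hjn : ¬ n ≤ j := by
        intro hc
        rw [rd_zero hD (Or.inr hc)] at hj
        omega
      have H := h2 0 j (by omega) (by omega) (by rw [extLD_zero]; exact ha)
        (by rw [extRD_mid hj1 (by omega)]; exact hj)
      omega
    · intro ha hb
      have H := h2 0 (n + 1) (by omega) (le_refl _)
        (by rw [extLD_zero]; exact ha) (by rw [extRD_top]; exact hb)
      omega
    · intro hb i hi
      have hi2 : 2 ≤ i ∧ i ≤ n := by
        by_contra hc
        rw [ld_zero hD (by omega)] at hi
        omega
      have H := h2 i (n + 1) (by omega) (le_refl _)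
        (by rw [extLD_mid (by omega) (by omega)]; exact hi) (by rw [extRD_top]; exact hb)
      omega
  · rintro ⟨hM, c1, c2, c3, c4, c5⟩
    have hD : IsDiagram n A := mred_diagram hM
    obtain ⟨hz, m1, m2⟩ := hM
    refine ⟨⟨hz, m1, m2⟩, ?_, ?_⟩
    · intro i hi
      rcases Nat.eq_zero_or_pos i with rfl | hi0
      · rw [extLD_zero, Nat.zero_add]
        rcases eq_or_ne (n + 2) m with he | he
        · rw [show m - 1 = n + 1 by omega, extRD_top]
          have := c1 (by omega)
          rwa [if_pos he] at this
        · rw [extRD_mid (by omega) (by omega)]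
          have := c1 (by omega)
          rwa [if_neg he] at this
      · rw [extLD_mid (by omega) (by omega)]
        rcases eq_or_ne (i + m - 1) (n + 1) with he | he
        · rw [he, extRD_top, show i = n + 2 - m by omega]
          exact c2 (by omega)
        · rw [extRD_mid (by omega) he]
          exact m1 i (by omega) (by omega)
    · intro i j hij hj hLD hRD
      have hj0 : j ≠ 0 := by omega
      rcases eq_or_ne j (n + 1) with rfl | hjn
      · rw [extRD_top] at hRD
        rcases Nat.eq_zero_or_pos i with rfl | hi0
        · rw [extLD_zero] at hLD
          have := c4 hLD hRD
          omega
        · rw [extLD_mid (by omega) (by omega)] at hLD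
          have := c5 hRD i hLD
          omega
      · have hjn' : j ≤ n := by omega
        rw [extRD_mid hj0 hjn] at hRD
        rcases Nat.eq_zero_or_pos i with rfl | hi0
        · rw [extLD_zero] at hLD
          have := c3 hLD j hRD
          omega
        · rw [extLD_mid (by omega) (by omega)] at hLD
          exact m2 i j hi0 hij hjn' hLD hRD

lemma mred_empty {m n : ℕ} : MRed m n (∅ : Arcs) := by
  have hld : ∀ v, ld (∅ : Arcs) v = 0 := fun v => by
    unfold ld; simp
  have hrd : ∀ v, rd (∅ : Arcs) v = 0 := fun v => by
    unfold rd; simp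
  refine ⟨⟨⟨fun p hp => absurd hp (Finset.notMem_empty p),
    fun p hp => absurd hp (Finset.notMem_empty p)⟩,
    fun v => by unfold deg; rw [hld, hrd]; omega,
    fun v hv => by rw [hld] at hv; omega⟩,
    fun i _ _ => by rw [hld, hrd]; omega,
    fun i j _ _ _ h _ => by rw [hld] at h; omega⟩

end Proofs

section Proofs2

/-! ### Reflection -/

/-- Reflect a structure on `[ℓ]`. -/
def rev (ℓ : ℕ) (A : Arcs) : Arcs := A.image fun p => (ℓ + 1 - p.2, ℓ + 1 - p.1)

lemma rev_injOn {ℓ : ℕ} {A : Arcs} (hA : IsDiagram ℓ A) :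
    Set.InjOn (fun p : ℕ × ℕ => (ℓ + 1 - p.2, ℓ + 1 - p.1)) A := by
  rintro ⟨a, b⟩ hp ⟨d, e⟩ hq h
  have h1 := hA _ hp
  have h2 := hA _ hq
  simp only [Prod.mk.injEq] at h ⊢
  omega

lemma diagram_rev {ℓ : ℕ} {A : Arcs} (hA : IsDiagram ℓ A) : IsDiagram ℓ (rev ℓ A) := by
  intro p hp
  rw [rev, Finset.mem_image] at hp
  obtain ⟨q, hq, rfl⟩ := hp
  have := hA q hq
  simp only
  omega

lemma ld_rev {ℓ : ℕ} {A : Arcs} (hA : IsDiagram ℓ A) (v : ℕ) :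
    ld (rev ℓ A) v = rd A (ℓ + 1 - v) := by
  unfold ld rev rd
  rw [Finset.filter_image,
    Finset.card_image_of_injOn ((rev_injOn hA).mono (Finset.coe_subset.mpr
      (Finset.filter_subset _ _)))]
  congr 1
  apply Finset.filter_congr
  intro p hp
  have := hA p hp
  simp only
  constructor <;> intro h <;> omega

lemma rd_rev {ℓ : ℕ} {A : Arcs} (hA : IsDiagram ℓ A) (v : ℕ) :
    rd (rev ℓ A) v = ld A (ℓ + 1 - v) := by
  unfold ld rev rd
  rw [Finset.filter_image,
    Finset.card_image_of_injOn ((rev_injOn hA).mono (Finset.coe_subset.mpr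
      (Finset.filter_subset _ _)))]
  congr 1
  apply Finset.filter_congr
  intro p hp
  have := hA p hp
  simp only
  constructor <;> intro h <;> omega

lemma rev_rev {ℓ : ℕ} {A : Arcs} (hA : IsDiagram ℓ A) : rev ℓ (rev ℓ A) = A := by
  unfold rev
  rw [Finset.image_image]
  have : A.image ((fun p : ℕ × ℕ => (ℓ + 1 - p.2, ℓ + 1 - p.1)) ∘
      fun p : ℕ × ℕ => (ℓ + 1 - p.2, ℓ + 1 - p.1)) = A.image id := by
    apply Finset.image_congr
    intro p hp
    have := hA p hp
    simp only [Function.comp, id]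
    ext <;> simp <;> omega
  rw [this, Finset.image_id]

lemma mred_rev {m ℓ : ℕ} {A : Arcs} (hM : MRed m ℓ A) : MRed m ℓ (rev ℓ A) := by
  obtain ⟨⟨⟨hD, hcr⟩, hdeg, hboth⟩, m1, m2⟩ := hM
  refine ⟨⟨⟨diagram_rev hD, ?_⟩, ?_, ?_⟩, ?_, ?_⟩
  · intro p hp q hq hc
    rw [rev, Finset.mem_image] at hp hq
    obtain ⟨p', hp', rfl⟩ := hp
    obtain ⟨q', hq', rfl⟩ := hq
    have b1 := hD p' hp'
    have b2 := hD q' hq'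
    obtain ⟨h1, h2, h3⟩ := hc
    simp only at h1 h2 h3
    exact hcr q' hq' p' hp' ⟨by omega, by omega, by omega⟩
  · intro v
    unfold deg
    rw [ld_rev hD, rd_rev hD]
    have := hdeg (ℓ + 1 - v)
    unfold deg at this
    omega
  · intro v hv
    rw [ld_rev hD, rd_rev hD] at hv
    exact hboth (ℓ + 1 - v) ⟨hv.2, hv.1⟩
  · intro i hi1 hi2
    rw [ld_rev hD, rd_rev hD]
    have H := m1 (ℓ + 2 - m - i) (by omega) (by omega)
    rw [show ℓ + 2 - m - i + m - 1 = ℓ + 1 - i by omega] at H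
    rw [show ℓ + 1 - (i + m - 1) = ℓ + 2 - m - i by omega]
    omega
  · intro i j hi1 hij hj hld hrd
    rw [ld_rev hD] at hld
    rw [rd_rev hD] at hrd
    have hb1 : ℓ + 1 - i < ℓ := by
      by_contra hc
      rw [rd_zero hD (Or.inr (by omega))] at hld
      omega
    have hb2 : 2 ≤ ℓ + 1 - j := by
      by_contra hc
      rw [ld_zero hD (by omega)] at hrd
      omega
    have := m2 (ℓ + 1 - j) (ℓ + 1 - i) (by omega) (by omega) (by omega) hrd hld
    omega

lemma gcnt_rev (m ℓ : ℕ) :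
    Nat.card {B : Arcs // MRed m ℓ B ∧ deg B ℓ ≤ 1} = gcnt m ℓ := by
  unfold gcnt
  apply Nat.card_congr
  refine ⟨fun B => ⟨rev ℓ B.1, mred_rev B.2.1, ?_⟩,
    fun B => ⟨rev ℓ B.1, mred_rev B.2.1, ?_⟩, fun B => ?_, fun B => ?_⟩
  · have hD := mred_diagram B.2.1
    unfold deg
    rw [ld_rev hD, rd_rev hD, show ℓ + 1 - 1 = ℓ by omega]
    have := B.2.2
    unfold deg at this
    omega
  · have hD := mred_diagram B.2.1
    unfold deg
    rw [ld_rev hD, rd_rev hD, show ℓ + 1 - ℓ = 1 by omega]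
    have := B.2.2
    unfold deg at this
    omega
  · exact Subtype.ext (rev_rev (mred_diagram B.2.1))
  · exact Subtype.ext (rev_rev (mred_diagram B.2.1))

/-! ### Cardinality helpers -/

lemma tc_eq_one {m a b n : ℕ} (h : ∀ A, BoundaryType m a b n A ↔ A = ∅) :
    tc m a b n = 1 := by
  unfold tc
  haveI : Unique {A : Arcs // BoundaryType m a b n A} :=
    { default := ⟨∅, (h ∅).2 rfl⟩
      uniq := fun B => Subtype.ext ((h B.1).1 B.2) }
  exact Nat.card_unique

lemma tc_eq_zero {m a b n : ℕ} (h : ∀ A, ¬ BoundaryType m a b n A) :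
    tc m a b n = 0 := by
  unfold tc
  haveI : IsEmpty {A : Arcs // BoundaryType m a b n A} := ⟨fun B => h B.1 B.2⟩
  exact Nat.card_of_isEmpty

lemma tc_eq_card {m a b n c : ℕ} {Q : Arcs → Prop}
    (h : ∀ A, BoundaryType m a b n A ↔ ∃ B, Q B ∧ A = up c B) :
    tc m a b n = Nat.card {B : Arcs // Q B} := by
  unfold tc
  apply Nat.card_congr
  refine Equiv.symm (Equiv.ofBijective
    (fun B => ⟨up c B.1, (h _).2 ⟨B.1, B.2, rfl⟩⟩) ⟨?_, ?_⟩)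
  · intro B1 B2 hB
    exact Subtype.ext (up_inj c (congrArg Subtype.val hB))
  · intro A
    obtain ⟨B, hB, hA⟩ := (h A.1).1 A.2
    exact ⟨⟨B, hB⟩, Subtype.ext hA.symm⟩

lemma shift_struct {m c ℓ n : ℕ} (hm : 2 ≤ m) {A : Arcs} (hM : MRed m n A)
    (hcl : c + ℓ ≤ n) (hlo : ∀ p ∈ A, c < p.1) (hhi : ∀ p ∈ A, p.2 ≤ c + ℓ) :
    IsDiagram ℓ (shiftDown c A) ∧ A = up c (shiftDown c A) ∧ MRed m ℓ (shiftDown c A) := by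
  have hD := mred_diagram hM
  have hdiag : IsDiagram ℓ (shiftDown c A) := by
    intro p hp
    rw [shiftDown, Finset.mem_image] at hp
    obtain ⟨q, hq, rfl⟩ := hp
    have := hD q hq
    have := hlo q hq
    have := hhi q hq
    simp only
    omega
  have heq : A = up c (shiftDown c A) := (up_shiftDown hD hlo).symm
  refine ⟨hdiag, heq, (mred_up hm hdiag hcl).1 ?_⟩
  rw [← heq]
  exact hM

lemma ld_rd_empty : (∀ v, ld (∅ : Arcs) v = 0) ∧ ∀ v, rd (∅ : Arcs) v = 0 :=
  ⟨fun v => by unfold ld; simp, fun v => by unfold rd; simp⟩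

/-- Boundary type of the empty structure. -/
lemma bt_empty_iff {m a b n : ℕ} (hm : 2 ≤ m) :
    BoundaryType m a b n (∅ : Arcs) ↔
      (m ≤ n + 2 → a + (if n + 2 = m then b else 0) ≤ 2) ∧
      (m ≤ n + 1 → b ≤ 2) ∧ (0 < a → 0 < b → m ≤ n + 2) := by
  obtain ⟨hld, hrd⟩ := ld_rd_empty
  rw [BT_iff hm]
  constructor
  · rintro ⟨_, c1, c2, c3, c4, c5⟩
    refine ⟨fun h => ?_, fun h => ?_, c4⟩
    · have := c1 h
      rw [hrd] at this
      exact this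
    · have := c2 h
      rw [hld] at this
      omega
  · rintro ⟨e1, e2, e3⟩
    refine ⟨mred_empty, fun h => ?_, fun h => ?_, fun _ j hj => ?_, e3, fun _ i hi => ?_⟩
    · rw [hrd]
      exact e1 h
    · rw [hld]
      have := e2 h
      omega
    · rw [hrd] at hj
      omega
    · rw [hld] at hi
      omega

end Proofs2

section Proofs3

/-! ### Case (0,0) -/

lemma tc00 {m : ℕ} (hm : 2 ≤ m) (n : ℕ) : tc m 0 0 n = zm m n := by
  unfold tc zm
  apply Nat.card_congr (Equiv.subtypeEquivRight ?_)
  intro A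
  rw [BT_iff hm]
  constructor
  · exact fun h => h.1
  · intro hM
    refine ⟨hM, fun h => ?_, fun h => ?_, fun h => absurd h (lt_irrefl 0),
      fun h => absurd h (lt_irrefl 0), fun h => absurd h (lt_irrefl 0)⟩
    · have := rd_le_two (v := m - 1) hM.1
      split_ifs <;> omega
    · have := ld_le_two (v := n + 2 - m) hM.1
      omega

/-! ### Case (1,0) -/

lemma key10 {m n : ℕ} (hm : 2 ≤ m) (hn : m - 2 ≤ n) (A : Arcs) :
    BoundaryType m 1 0 n A ↔ ∃ B, TypeG m (n - (m - 2)) B ∧ A = up (m - 2) B := by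
  rw [BT_iff hm]
  constructor
  · rintro ⟨hM, c1, c2, c3, c4, c5⟩
    have hD := mred_diagram hM
    have hlo : ∀ p ∈ A, m - 2 < p.1 := by
      intro p hp
      have := c3 (by omega) p.1 (rd_pos_of_mem hp)
      omega
    have hhi : ∀ p ∈ A, p.2 ≤ (m - 2) + (n - (m - 2)) := by
      intro p hp
      have := hD p hp
      omega
    obtain ⟨hd, he, hq⟩ := shift_struct hm hM (by omega) hlo hhi
    refine ⟨shiftDown (m - 2) A, ⟨hq, ?_⟩, he⟩
    have hld1 : ld (shiftDown (m - 2) A) 1 = 0 := ld_zero hd (Or.inl le_rfl)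
    have hrd1 : rd (shiftDown (m - 2) A) 1 ≤ 1 := by
      have hr : rd A (m - 1) ≤ 1 := by
        rcases eq_or_ne (n + 2) m with hc | hc
        · have := rd_zero hD (v := m - 1) (Or.inr (by omega))
          omega
        · have := c1 (by omega)
          rw [if_neg hc] at this
          omega
      rw [he, rd_up hd, show m - 1 - (m - 2) = 1 by omega] at hr
      exact hr
    unfold deg
    omega
  · rintro ⟨B, ⟨hB, hdeg⟩, rfl⟩
    have hBd := mred_diagram hB
    have hM : MRed m n (up (m - 2) B) := (mred_up hm hBd (by omega)).2 hB
    refine ⟨hM, fun _ => ?_, fun _ => ?_, fun _ j hj => ?_,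
      fun _ h => absurd h (lt_irrefl 0), fun h => absurd h (lt_irrefl 0)⟩
    · have e : rd (up (m - 2) B) (m - 1) ≤ 1 := by
        rw [rd_up hBd, show m - 1 - (m - 2) = 1 by omega]
        unfold deg at hdeg
        omega
      split_ifs <;> omega
    · have := ld_le_two (v := n + 2 - m) hM.1
      omega
    · rw [rd_up hBd] at hj
      have : j - (m - 2) ≠ 0 := by
        intro h
        rw [h, rd_zero hBd (Or.inl rfl)] at hj
        omega
      omega

lemma tc10_eq {m : ℕ} (hm : 2 ≤ m) (n : ℕ) :
    tc m 1 0 n = if n < m - 2 then 1 else gcnt m (n - (m - 2)) := by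
  split_ifs with h
  · apply tc_eq_one
    intro A
    constructor
    · intro hbt
      rw [BT_iff hm] at hbt
      obtain ⟨hM, c1, c2, c3, c4, c5⟩ := hbt
      have hD := mred_diagram hM
      rw [Finset.eq_empty_iff_forall_notMem]
      intro p hp
      have h1 := hD p hp
      have h2 := c3 (by omega) p.1 (rd_pos_of_mem hp)
      omega
    · rintro rfl
      rw [bt_empty_iff hm]
      refine ⟨fun _ => ?_, fun _ => by omega, fun _ h => absurd h (lt_irrefl 0)⟩
      split_ifs <;> omega
  · rw [tc_eq_card (key10 hm (by omega))]
    rfl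

/-! ### Case (2,0) -/

lemma key20 {m n : ℕ} (hm : 2 ≤ m) (hn : m - 1 ≤ n) (A : Arcs) :
    BoundaryType m 2 0 n A ↔ ∃ B, MRed m (n - (m - 1)) B ∧ A = up (m - 1) B := by
  rw [BT_iff hm]
  constructor
  · rintro ⟨hM, c1, c2, c3, c4, c5⟩
    have hD := mred_diagram hM
    have hrm : rd A (m - 1) = 0 := by
      have := c1 (by omega)
      rw [if_neg (by omega)] at this
      omega
    have hlo : ∀ p ∈ A, m - 1 < p.1 := by
      intro p hp
      have h1 := c3 (by omega) p.1 (rd_pos_of_mem hp)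
      have h2 : p.1 ≠ m - 1 := by
        intro he
        rw [← he] at hrm
        have := rd_pos_of_mem hp
        omega
      omega
    have hhi : ∀ p ∈ A, p.2 ≤ (m - 1) + (n - (m - 1)) := by
      intro p hp
      have := hD p hp
      omega
    obtain ⟨hd, he, hq⟩ := shift_struct hm hM (by omega) hlo hhi
    exact ⟨shiftDown (m - 1) A, hq, he⟩
  · rintro ⟨B, hB, rfl⟩
    have hBd := mred_diagram hB
    have hM : MRed m n (up (m - 1) B) := (mred_up hm hBd (by omega)).2 hB
    refine ⟨hM, fun _ => ?_, fun _ => ?_, fun _ j hj => ?_,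
      fun _ h => absurd h (lt_irrefl 0), fun h => absurd h (lt_irrefl 0)⟩
    · have e : rd (up (m - 1) B) (m - 1) = 0 := by
        rw [rd_up hBd, show m - 1 - (m - 1) = 0 by omega, rd_zero hBd (Or.inl rfl)]
      split_ifs <;> omega
    · have := ld_le_two (v := n + 2 - m) hM.1
      omega
    · rw [rd_up hBd] at hj
      have : j - (m - 1) ≠ 0 := by
        intro h
        rw [h, rd_zero hBd (Or.inl rfl)] at hj
        omega
      omega

lemma tc20_eq {m : ℕ} (hm : 2 ≤ m) (n : ℕ) :
    tc m 2 0 n = if n < m - 1 then 1 else zm m (n - (m - 1)) := by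
  split_ifs with h
  · apply tc_eq_one
    intro A
    constructor
    · intro hbt
      rw [BT_iff hm] at hbt
      obtain ⟨hM, c1, c2, c3, c4, c5⟩ := hbt
      have hD := mred_diagram hM
      rw [Finset.eq_empty_iff_forall_notMem]
      intro p hp
      have h1 := hD p hp
      have h2 := c3 (by omega) p.1 (rd_pos_of_mem hp)
      omega
    · rintro rfl
      rw [bt_empty_iff hm]
      refine ⟨fun _ => ?_, fun _ => by omega, fun _ h => absurd h (lt_irrefl 0)⟩
      split_ifs <;> omega
  · rw [tc_eq_card (key20 hm (by omega))]
    rfl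

/-! ### Case (1,1) -/

lemma key11 {m n : ℕ} (hm : 2 ≤ m) (hn : 2 * m - 4 ≤ n) (A : Arcs) :
    BoundaryType m 1 1 n A ↔ ∃ B, TypeH m (n - (2 * m - 4)) B ∧ A = up (m - 2) B := by
  rw [BT_iff hm]
  constructor
  · rintro ⟨hM, c1, c2, c3, c4, c5⟩
    have hD := mred_diagram hM
    have hlo : ∀ p ∈ A, m - 2 < p.1 := by
      intro p hp
      have := c3 (by omega) p.1 (rd_pos_of_mem hp)
      omega
    have hhi : ∀ p ∈ A, p.2 ≤ (m - 2) + (n - (2 * m - 4)) := by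
      intro p hp
      have h1 := c5 (by omega) p.2 (ld_pos_of_mem hp)
      omega
    obtain ⟨hd, he, hq⟩ := shift_struct hm hM (by omega) hlo hhi
    refine ⟨shiftDown (m - 2) A, ⟨hq, ?_, ?_⟩, he⟩
    · have hld1 : ld (shiftDown (m - 2) A) 1 = 0 := ld_zero hd (Or.inl le_rfl)
      have hrd1 : rd (shiftDown (m - 2) A) 1 ≤ 1 := by
        have hr : rd A (m - 1) ≤ 1 := by
          rcases eq_or_ne (n + 2) m with hc | hc
          · have := rd_zero hD (v := m - 1) (Or.inr (by omega))
            omega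
          · have := c1 (by omega)
            rw [if_neg hc] at this
            omega
        rw [he, rd_up hd, show m - 1 - (m - 2) = 1 by omega] at hr
        exact hr
      unfold deg
      omega
    · have hrdl : rd (shiftDown (m - 2) A) (n - (2 * m - 4)) = 0 :=
        rd_zero hd (Or.inr le_rfl)
      have hldl : ld (shiftDown (m - 2) A) (n - (2 * m - 4)) ≤ 1 := by
        rcases le_or_gt m (n + 1) with hc | hc
        · have hl : ld A (n + 2 - m) ≤ 1 := by
            have := c2 hc
            omega
          rw [he, ld_up hd, show n + 2 - m - (m - 2) = n - (2 * m - 4) by omega] at hl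
          exact hl
        · have hz : n - (2 * m - 4) = 0 := by omega
          rw [hz, ld_zero hd (Or.inl (by omega))]
          omega
      unfold deg
      omega
  · rintro ⟨B, ⟨hB, hd1, hdl⟩, rfl⟩
    have hBd := mred_diagram hB
    have hM : MRed m n (up (m - 2) B) := (mred_up hm hBd (by omega)).2 hB
    refine ⟨hM, fun _ => ?_, fun hmn => ?_, fun _ j hj => ?_, fun _ _ => by omega,
      fun _ i hi => ?_⟩
    · have e : rd (up (m - 2) B) (m - 1) ≤ 1 := by
        rw [rd_up hBd, show m - 1 - (m - 2) = 1 by omega]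
        unfold deg at hd1
        omega
      split_ifs <;> omega
    · have e : ld (up (m - 2) B) (n + 2 - m) ≤ 1 := by
        rw [ld_up hBd, show n + 2 - m - (m - 2) = n - (2 * m - 4) by omega]
        unfold deg at hdl
        omega
      omega
    · rw [rd_up hBd] at hj
      have : j - (m - 2) ≠ 0 := by
        intro h
        rw [h, rd_zero hBd (Or.inl rfl)] at hj
        omega
      omega
    · rw [ld_up hBd] at hi
      have h1 : i - (m - 2) ≤ n - (2 * m - 4) := by
        by_contra hc
        rw [ld_zero hBd (Or.inr (by omega))] at hi
        omega
      have h2 : i - (m - 2) ≠ 0 := by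
        intro h
        rw [h, ld_zero hBd (Or.inl (by omega))] at hi
        omega
      omega

lemma tc11_eq {m : ℕ} (hm : 2 ≤ m) (n : ℕ) :
    tc m 1 1 n = if n < m - 2 then 0 else if n < 2 * m - 4 then 1
      else hcnt m (n - (2 * m - 4)) := by
  split_ifs with h1 h2
  · apply tc_eq_zero
    intro A hbt
    rw [BT_iff hm] at hbt
    have := hbt.2.2.2.2.1 (by omega) (by omega)
    omega
  · apply tc_eq_one
    intro A
    constructor
    · intro hbt
      rw [BT_iff hm] at hbt
      obtain ⟨hM, c1, c2, c3, c4, c5⟩ := hbt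
      have hD := mred_diagram hM
      rw [Finset.eq_empty_iff_forall_notMem]
      intro p hp
      have hb := hD p hp
      have ha := c3 (by omega) p.1 (rd_pos_of_mem hp)
      have hc := c5 (by omega) p.2 (ld_pos_of_mem hp)
      omega
    · rintro rfl
      rw [bt_empty_iff hm]
      refine ⟨fun _ => ?_, fun _ => by omega, fun _ _ => by omega⟩
      split_ifs <;> omega
  · rw [tc_eq_card (key11 hm (by omega))]
    rfl

/-! ### Case (2,1) -/

lemma key21 {m n : ℕ} (hm : 2 ≤ m) (hn : 2 * m - 3 ≤ n) (A : Arcs) :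
    BoundaryType m 2 1 n A ↔
      ∃ B, (MRed m (n - (2 * m - 3)) B ∧ deg B (n - (2 * m - 3)) ≤ 1) ∧
        A = up (m - 1) B := by
  rw [BT_iff hm]
  constructor
  · rintro ⟨hM, c1, c2, c3, c4, c5⟩
    have hD := mred_diagram hM
    have hrm : rd A (m - 1) = 0 := by
      have := c1 (by omega)
      rw [if_neg (by omega)] at this
      omega
    have hlo : ∀ p ∈ A, m - 1 < p.1 := by
      intro p hp
      have h1 := c3 (by omega) p.1 (rd_pos_of_mem hp)
      have h2 : p.1 ≠ m - 1 := by
        intro he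
        rw [← he] at hrm
        have := rd_pos_of_mem hp
        omega
      omega
    have hhi : ∀ p ∈ A, p.2 ≤ (m - 1) + (n - (2 * m - 3)) := by
      intro p hp
      have h1 := c5 (by omega) p.2 (ld_pos_of_mem hp)
      omega
    obtain ⟨hd, he, hq⟩ := shift_struct hm hM (by omega) hlo hhi
    refine ⟨shiftDown (m - 1) A, ⟨hq, ?_⟩, he⟩
    have hrdl : rd (shiftDown (m - 1) A) (n - (2 * m - 3)) = 0 :=
      rd_zero hd (Or.inr le_rfl)
    have hldl : ld (shiftDown (m - 1) A) (n - (2 * m - 3)) ≤ 1 := by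
      have hl : ld A (n + 2 - m) ≤ 1 := by
        have := c2 (by omega)
        omega
      rw [he, ld_up hd, show n + 2 - m - (m - 1) = n - (2 * m - 3) by omega] at hl
      exact hl
    unfold deg
    omega
  · rintro ⟨B, ⟨hB, hdeg⟩, rfl⟩
    have hBd := mred_diagram hB
    have hM : MRed m n (up (m - 1) B) := (mred_up hm hBd (by omega)).2 hB
    refine ⟨hM, fun _ => ?_, fun _ => ?_, fun _ j hj => ?_, fun _ _ => by omega,
      fun _ i hi => ?_⟩
    · have e : rd (up (m - 1) B) (m - 1) = 0 := by
        rw [rd_up hBd, show m - 1 - (m - 1) = 0 by omega, rd_zero hBd (Or.inl rfl)]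
      split_ifs <;> omega
    · have e : ld (up (m - 1) B) (n + 2 - m) ≤ 1 := by
        rw [ld_up hBd, show n + 2 - m - (m - 1) = n - (2 * m - 3) by omega]
        unfold deg at hdeg
        omega
      omega
    · rw [rd_up hBd] at hj
      have : j - (m - 1) ≠ 0 := by
        intro h
        rw [h, rd_zero hBd (Or.inl rfl)] at hj
        omega
      omega
    · rw [ld_up hBd] at hi
      have h1 : i - (m - 1) ≤ n - (2 * m - 3) := by
        by_contra hc
        rw [ld_zero hBd (Or.inr (by omega))] at hi
        omega
      have h2 : i - (m - 1) ≠ 0 := by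
        intro h
        rw [h, ld_zero hBd (Or.inl (by omega))] at hi
        omega
      omega

lemma tc21_eq {m : ℕ} (hm : 2 ≤ m) (n : ℕ) :
    tc m 2 1 n = if n < m - 1 then 0 else if n < 2 * m - 3 then 1
      else gcnt m (n - (2 * m - 3)) := by
  split_ifs with h1 h2
  · apply tc_eq_zero
    intro A hbt
    rw [BT_iff hm] at hbt
    obtain ⟨hM, c1, c2, c3, c4, c5⟩ := hbt
    have h4 := c4 (by omega) (by omega)
    have := c1 (by omega)
    have hD := mred_diagram hM
    have hr : rd A (m - 1) = 0 := rd_zero hD (Or.inr (by omega))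
    split_ifs at this <;> omega
  · apply tc_eq_one
    intro A
    constructor
    · intro hbt
      rw [BT_iff hm] at hbt
      obtain ⟨hM, c1, c2, c3, c4, c5⟩ := hbt
      have hD := mred_diagram hM
      have hrm : rd A (m - 1) = 0 := by
        have := c1 (by omega)
        rw [if_neg (by omega)] at this
        omega
      rw [Finset.eq_empty_iff_forall_notMem]
      intro p hp
      have hb := hD p hp
      have ha := c3 (by omega) p.1 (rd_pos_of_mem hp)
      have ha2 : p.1 ≠ m - 1 := by
        intro he
        rw [← he] at hrm
        have := rd_pos_of_mem hp
        omega
      have hc := c5 (by omega) p.2 (ld_pos_of_mem hp)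
      omega
    · rintro rfl
      rw [bt_empty_iff hm]
      refine ⟨fun _ => ?_, fun _ => by omega, fun _ _ => by omega⟩
      split_ifs <;> omega
  · rw [tc_eq_card (key21 hm (by omega))]
    exact gcnt_rev m (n - (2 * m - 3))

/-! ### Case (2,2) -/

lemma key22 {m n : ℕ} (hm : 2 ≤ m) (hn : 2 * m - 2 ≤ n) (A : Arcs) :
    BoundaryType m 2 2 n A ↔ ∃ B, MRed m (n - (2 * m - 2)) B ∧ A = up (m - 1) B := by
  rw [BT_iff hm]
  constructor
  · rintro ⟨hM, c1, c2, c3, c4, c5⟩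
    have hD := mred_diagram hM
    have hrm : rd A (m - 1) = 0 := by
      have := c1 (by omega)
      rw [if_neg (by omega)] at this
      omega
    have hlm : ld A (n + 2 - m) = 0 := by
      have := c2 (by omega)
      omega
    have hlo : ∀ p ∈ A, m - 1 < p.1 := by
      intro p hp
      have h1 := c3 (by omega) p.1 (rd_pos_of_mem hp)
      have h2 : p.1 ≠ m - 1 := by
        intro he
        rw [← he] at hrm
        have := rd_pos_of_mem hp
        omega
      omega
    have hhi : ∀ p ∈ A, p.2 ≤ (m - 1) + (n - (2 * m - 2)) := by
      intro p hp
      have h1 := c5 (by omega) p.2 (ld_pos_of_mem hp)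
      have h2 : p.2 ≠ n + 2 - m := by
        intro he
        rw [← he] at hlm
        have := ld_pos_of_mem hp
        omega
      omega
    obtain ⟨hd, he, hq⟩ := shift_struct hm hM (by omega) hlo hhi
    exact ⟨shiftDown (m - 1) A, hq, he⟩
  · rintro ⟨B, hB, rfl⟩
    have hBd := mred_diagram hB
    have hM : MRed m n (up (m - 1) B) := (mred_up hm hBd (by omega)).2 hB
    refine ⟨hM, fun _ => ?_, fun _ => ?_, fun _ j hj => ?_, fun _ _ => by omega,
      fun _ i hi => ?_⟩
    · have e : rd (up (m - 1) B) (m - 1) = 0 := by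
        rw [rd_up hBd, show m - 1 - (m - 1) = 0 by omega, rd_zero hBd (Or.inl rfl)]
      split_ifs <;> omega
    · have e : ld (up (m - 1) B) (n + 2 - m) = 0 := by
        rw [ld_up hBd, ld_zero hBd (Or.inr (by omega))]
      omega
    · rw [rd_up hBd] at hj
      have : j - (m - 1) ≠ 0 := by
        intro h
        rw [h, rd_zero hBd (Or.inl rfl)] at hj
        omega
      omega
    · rw [ld_up hBd] at hi
      have h1 : i - (m - 1) ≤ n - (2 * m - 2) := by
        by_contra hc
        rw [ld_zero hBd (Or.inr (by omega))] at hi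
        omega
      have h2 : i - (m - 1) ≠ 0 := by
        intro h
        rw [h, ld_zero hBd (Or.inl (by omega))] at hi
        omega
      omega

lemma tc22_eq {m : ℕ} (hm : 2 ≤ m) (n : ℕ) :
    tc m 2 2 n = if n < m - 1 then 0 else if n < 2 * m - 2 then 1
      else zm m (n - (2 * m - 2)) := by
  split_ifs with h1 h2
  · apply tc_eq_zero
    intro A hbt
    rw [BT_iff hm] at hbt
    obtain ⟨hM, c1, c2, c3, c4, c5⟩ := hbt
    have h4 := c4 (by omega) (by omega)
    have := c1 (by omega)
    have hD := mred_diagram hM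
    have hr : rd A (m - 1) = 0 := rd_zero hD (Or.inr (by omega))
    split_ifs at this <;> omega
  · apply tc_eq_one
    intro A
    constructor
    · intro hbt
      rw [BT_iff hm] at hbt
      obtain ⟨hM, c1, c2, c3, c4, c5⟩ := hbt
      have hD := mred_diagram hM
      have hrm : rd A (m - 1) = 0 := by
        have := c1 (by omega)
        rw [if_neg (by omega)] at this
        omega
      rw [Finset.eq_empty_iff_forall_notMem]
      intro p hp
      have hb := hD p hp
      have ha := c3 (by omega) p.1 (rd_pos_of_mem hp)
      have ha2 : p.1 ≠ m - 1 := by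
        intro he
        rw [← he] at hrm
        have := rd_pos_of_mem hp
        omega
      have hc := c5 (by omega) p.2 (ld_pos_of_mem hp)
      omega
    · rintro rfl
      rw [bt_empty_iff hm]
      refine ⟨fun _ => ?_, fun _ => by omega, fun _ _ => by omega⟩
      split_ifs <;> omega
  · rw [tc_eq_card (key22 hm (by omega))]
    rfl

end Proofs3

section Proofs4

lemma coeff_geom (k n : ℕ) :
    (coeff n) (∑ i ∈ Finset.range k, Xq ^ i) = if n < k then 1 else 0 := by
  unfold Xq
  rw [map_sum]
  simp only [coeff_X_pow]
  rw [Finset.sum_ite_eq (Finset.range k) n fun _ => (1 : ℚ)]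
  simp [Finset.mem_range]

lemma coeff_shift (F : PowerSeries ℚ) (c n : ℕ) :
    (coeff n) (Xq ^ c * F) = if c ≤ n then coeff (n - c) F else 0 := by
  unfold Xq
  exact PowerSeries.coeff_X_pow_mul' F c n

end Proofs4

/-- the generating functions `T_i(x)` in terms of `Z_m`, `G`, `H`;
`(1−x^k)/(1−x)` is the polynomial `1 + x + ⋯ + x^{k−1}`. -/
theorem T_formulas (m : ℕ) (hm : 2 ≤ m) :
    Tgf m 0 0 = Zm m ∧
    Tgf m 1 0 = (∑ i ∈ Finset.range (m - 2), Xq ^ i) + Xq ^ (m - 2) * Ggf m ∧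
    Tgf m 1 1 = Xq ^ (m - 2) * (∑ i ∈ Finset.range (m - 2), Xq ^ i)
        + Xq ^ (2 * m - 4) * Hgf m ∧
    Tgf m 2 0 = (∑ i ∈ Finset.range (m - 1), Xq ^ i) + Xq ^ (m - 1) * Zm m ∧
    Tgf m 2 1 = Xq ^ (m - 1) * (∑ i ∈ Finset.range (m - 2), Xq ^ i)
        + Xq ^ (2 * m - 3) * Ggf m ∧
    Tgf m 2 2 = Xq ^ (m - 1) * (∑ i ∈ Finset.range (m - 1), Xq ^ i)
        + Xq ^ (2 * m - 2) * Zm m := by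
  have h2m : 2 ≤ m := hm
  refine ⟨?_, ?_, ?_, ?_, ?_, ?_⟩
  · ext n
    rw [Tgf, Zm, coeff_mk, coeff_mk, tc00 hm]
  · ext n
    rw [Tgf, coeff_mk, tc10_eq hm, map_add, coeff_geom, coeff_shift, Ggf, coeff_mk]
    push_cast
    split_ifs <;> first | (exfalso; omega) | simp
  · ext n
    rw [Tgf, coeff_mk, tc11_eq hm, map_add, coeff_shift, coeff_geom, coeff_shift,
      Hgf, coeff_mk]
    push_cast
    split_ifs <;> first | (exfalso; omega) | simp
  · ext n
    rw [Tgf, coeff_mk, tc20_eq hm, map_add, coeff_geom, coeff_shift, Zm, coeff_mk]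
    push_cast
    split_ifs <;> first | (exfalso; omega) | simp
  · ext n
    rw [Tgf, coeff_mk, tc21_eq hm, map_add, coeff_shift, coeff_geom, coeff_shift,
      Ggf, coeff_mk]
    push_cast
    split_ifs <;> first | (exfalso; omega) | simp
  · ext n
    rw [Tgf, coeff_mk, tc22_eq hm, map_add, coeff_shift, coeff_geom, coeff_shift,
      Zm, coeff_mk]
    push_cast
    split_ifs <;> first | (exfalso; omega) | simp
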